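/- Let n be a positive integer, let C₋ be an n×n complex Hermitian positive definite matrix, let y ∈ ℂⁿ, let A be a nonempty finite set, and let φ : A → ℂⁿ with φ(a) ≠ 0 for all a ∈ A. For a ∈ A define s(a) = φ(a)^H C₋⁻¹ φ(a), a strictly positive real, and q(a) = |φ(a)^H C₋⁻¹ y|², and for γ ≥ 0 define the real number F(a, γ) = log det(C₋ + γ·φ(a)φ(a)^H) + y^H (C₋ + γ·φ(a)φ(a)^H)⁻¹ y. Suppose B = {a ∈ A : q(a) > s(a)} is nonempty, let a* ∈ B satisfy q(a*)/s(a*) ≥ q(a)/s(a) for all a ∈ B, and set γ* = (q(a*) − s(a*))/s(a*)². Then F(a*, γ*) ≤ F(a, γ) for every a ∈ A and every γ ≥ 0. -/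

import Mathlib

open Matrix ComplexOrder


private lemma vmv_mulVec {k : ℕ} (v w x : Fin k → ℂ) :
    (vecMulVec v w) *ᵥ x = (w ⬝ᵥ x) • v := by
  ext i
  simp only [mulVec, dotProduct, vecMulVec_apply, Pi.smul_apply, smul_eq_mul, Finset.sum_mul]
  exact Finset.sum_congr rfl fun j _ => by ring

private lemma mul_vmv {k : ℕ} (B : Matrix (Fin k) (Fin k) ℂ) (v w : Fin k → ℂ) :
    B * vecMulVec v w = vecMulVec (B *ᵥ v) w := by
  ext i j
  simp only [mul_apply, vecMulVec_apply, mulVec, dotProduct, Finset.sum_mul]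
  exact Finset.sum_congr rfl fun l _ => by ring

private lemma vmv_mul_vmv {k : ℕ} (a b c d : Fin k → ℂ) :
    vecMulVec a b * vecMulVec c d = (b ⬝ᵥ c) • vecMulVec a d := by
  ext i j
  simp only [mul_apply, vecMulVec_apply, Matrix.smul_apply, smul_eq_mul, dotProduct,
    Finset.sum_mul]
  exact Finset.sum_congr rfl fun l _ => by ring

private lemma matrix_step {k : ℕ} (Cm : Matrix (Fin k) (Fin k) ℂ) (hCm : Cm.PosDef)
    (v y : Fin k → ℂ) (γ sr qr : ℝ) (hγ : 0 ≤ γ) (hsr : 0 < sr)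
    (hs : (sr : ℂ) = star v ⬝ᵥ Cm⁻¹ *ᵥ v)
    (hq : (qr : ℂ) = (star v ⬝ᵥ Cm⁻¹ *ᵥ y) * star (star v ⬝ᵥ Cm⁻¹ *ᵥ y)) :
    Real.log ((Cm + (γ:ℂ) • vecMulVec v (star v)).det.re) +
      (star y ⬝ᵥ ((Cm + (γ:ℂ) • vecMulVec v (star v))⁻¹ *ᵥ y)).re =
    Real.log (Cm.det.re) + (star y ⬝ᵥ (Cm⁻¹ *ᵥ y)).re +
      (Real.log (1 + γ * sr) - γ * qr / (1 + γ * sr)) := by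
  set Ci := Cm⁻¹ with hCi_def
  set P := vecMulVec v (star v) with hP_def
  have hu : (0:ℝ) < 1 + γ * sr := by positivity
  have hdetU : IsUnit Cm.det := hCm.det_pos.ne'.isUnit
  have hCmCi : Cm * Ci = 1 := mul_nonsing_inv _ hdetU
  -- determinant part
  have hγP : (γ:ℂ) • P = vecMulVec ((γ:ℂ) • v) (star v) := by
    ext i j
    simp only [hP_def, Matrix.smul_apply, vecMulVec_apply, Pi.smul_apply, smul_eq_mul]
    ring
  have hdet : (Cm + (γ:ℂ) • P).det = Cm.det * ((1 + γ * sr : ℝ) : ℂ) := by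
    rw [hγP, vecMulVec_eq Unit, det_add_replicateCol_mul_replicateRow hdetU]
    congr 1
    rw [det_unique, Matrix.add_apply, Matrix.one_apply_eq, Matrix.mul_assoc,
      ← replicateCol_mulVec, replicateRow_mul_replicateCol_apply, mulVec_smul, dotProduct_smul, smul_eq_mul, ← hs]
    push_cast
    ring
  have hdetre : (Cm + (γ:ℂ) • P).det.re = Cm.det.re * (1 + γ * sr) := by
    rw [hdet, Complex.mul_re, Complex.ofReal_re, Complex.ofReal_im]
    ring
  have hdpos : 0 < Cm.det.re := (Complex.lt_def.mp hCm.det_pos).1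
  -- Sherman--Morrison
  set kk : ℝ := γ / (1 + γ * sr) with hkk_def
  have hkk : kk * (1 + γ * sr) = γ := div_mul_cancel₀ γ hu.ne'
  have hkkC : (kk:ℂ) * (1 + (γ:ℂ) * (sr:ℂ)) = (γ:ℂ) := by exact_mod_cast congrArg Complex.ofReal hkk
  set Q : Matrix (Fin k) (Fin k) ℂ := Ci * P * Ci with hQ_def
  set X : Matrix (Fin k) (Fin k) ℂ := Ci - (kk:ℂ) • Q with hX_def
  have e1 : Cm * Q = P * Ci := by
    rw [hQ_def, ← Matrix.mul_assoc, ← Matrix.mul_assoc, hCmCi, Matrix.one_mul]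
  have ePCiP : P * (Ci * P) = (sr:ℂ) • P := by
    rw [hP_def, mul_vmv, vmv_mul_vmv, ← hs]
  have e2 : P * Q = (sr:ℂ) • (P * Ci) := by
    rw [hQ_def, ← Matrix.mul_assoc, ePCiP, Matrix.smul_mul]
  have hMX : (Cm + (γ:ℂ) • P) * X = 1 := by
    have expand : (Cm + (γ:ℂ) • P) * X =
        Cm * Ci - (kk:ℂ) • (Cm * Q) + ((γ:ℂ) • (P * Ci) - ((γ:ℂ) * (kk:ℂ)) • (P * Q)) := by
      rw [hX_def, Matrix.add_mul, Matrix.mul_sub, Matrix.mul_sub, Matrix.mul_smul,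
        Matrix.smul_mul, Matrix.smul_mul, Matrix.mul_smul, smul_smul]
    rw [expand, hCmCi, e1, e2, smul_smul]
    have hz : (γ:ℂ) • (P * Ci) - ((γ:ℂ) * (kk:ℂ) * (sr:ℂ)) • (P * Ci) - (kk:ℂ) • (P * Ci)
        = (0 : Matrix (Fin k) (Fin k) ℂ) := by
      rw [← sub_smul, ← sub_smul,
        show (γ:ℂ) - (γ:ℂ) * (kk:ℂ) * (sr:ℂ) - (kk:ℂ) = 0 by linear_combination -hkkC,
        zero_smul]
    calc (1 : Matrix (Fin k) (Fin k) ℂ) - (kk:ℂ) • (P * Ci)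
          + ((γ:ℂ) • (P * Ci) - ((γ:ℂ) * (kk:ℂ) * (sr:ℂ)) • (P * Ci))
        = 1 + ((γ:ℂ) • (P * Ci) - ((γ:ℂ) * (kk:ℂ) * (sr:ℂ)) • (P * Ci)
            - (kk:ℂ) • (P * Ci)) := by abel
      _ = 1 := by rw [hz, add_zero]
  -- quadratic form
  have hHerm : Ciᴴ = Ci := hCm.inv.1
  have hzstar : star (star v ⬝ᵥ Ci *ᵥ y) = star y ⬝ᵥ Ci *ᵥ v := by
    conv_lhs => rw [star_dotProduct]
    rw [star_star, star_mulVec, hHerm, ← dotProduct_mulVec]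
  have hquad : star y ⬝ᵥ X *ᵥ y = star y ⬝ᵥ Ci *ᵥ y - ((kk * qr : ℝ) : ℂ) := by
    rw [hX_def, sub_mulVec, dotProduct_sub, smul_mulVec, dotProduct_smul, smul_eq_mul]
    congr 1
    rw [hQ_def, ← mulVec_mulVec, ← mulVec_mulVec, hP_def, vmv_mulVec, mulVec_smul,
      dotProduct_smul, smul_eq_mul, ← hzstar, ← hq]
    push_cast
    ring
  rw [hdetre, Real.log_mul hdpos.ne' hu.ne', inv_eq_right_inv hMX, hquad,
    Complex.sub_re, Complex.ofReal_re]
  rw [show kk * qr = γ * qr / (1 + γ * sr) by rw [hkk_def]; ring]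
  ring

private lemma real_step (sr qr T : ℝ) (hs : 0 < sr) (hq : 0 ≤ qr) (hT : 1 < T)
    (hle : sr < qr → qr / sr ≤ T) (γ : ℝ) (hγ : 0 ≤ γ) :
    Real.log T - (T - 1) ≤ Real.log (1 + γ * sr) - γ * qr / (1 + γ * sr) := by
  have hu : (0:ℝ) < 1 + γ * sr := by positivity
  set u := 1 + γ * sr with hu_def
  have hu1 : 1 ≤ u := by nlinarith
  have hlogT : Real.log T ≤ T - 1 := Real.log_le_sub_one_of_pos (by linarith)
  by_cases hcase : qr ≤ sr
  · have h2 := Real.log_le_sub_one_of_pos (inv_pos.2 hu)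
    rw [Real.log_inv] at h2
    have hfr : (u - 1)/u = 1 - u⁻¹ := by field_simp
    have h1 : (u - 1)/u ≤ Real.log u := by linarith
    have h3 : γ * qr / u ≤ (u - 1)/u := by
      have hnum : γ * qr ≤ u - 1 := by nlinarith
      gcongr
    linarith
  · push_neg at hcase
    have htle := hle hcase
    set t := qr / sr with ht_def
    have ht1 : 1 < t := (one_lt_div hs).2 hcase
    have ht0 : 0 < t := by linarith
    have hstep1 : Real.log t - (t - 1) ≤ Real.log u - γ * qr / u := by
      have hγqr : γ * qr / u = t - t / u := by
        rw [ht_def, hu_def]; field_simp; ring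
      have h4 := Real.log_le_sub_one_of_pos (div_pos ht0 hu)
      rw [Real.log_div ht0.ne' hu.ne'] at h4
      rw [hγqr]; linarith
    have hstep2 : Real.log T - (T - 1) ≤ Real.log t - (t - 1) := by
      have h5 := Real.log_le_sub_one_of_pos (div_pos (by linarith : (0:ℝ) < T) ht0)
      rw [Real.log_div (by linarith : T ≠ 0) ht0.ne'] at h5
      have h6 : T / t ≤ T - t + 1 := by
        rw [div_le_iff₀ ht0]; nlinarith
      linarith
    linarith

/-- The grid adjustment step of GRASBI never increases the full maximum-likelihood
objective: with `F(a,γ) = log det(C₋ + γ·φ(a)φ(a)ᴴ) + yᴴ(C₋ + γ·φ(a)φ(a)ᴴ)⁻¹y`,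
`s(a) = φ(a)ᴴ C₋⁻¹ φ(a) > 0`, `q(a) = |φ(a)ᴴ C₋⁻¹ y|²`, if `B = {a : q(a) > s(a)}`
is nonempty and `a*` maximizes `q/s` over `B`, then `(a*, γ*)` with
`γ* = (q(a*) − s(a*))/s(a*)²` minimizes `F` over `A × [0,∞)`. -/
theorem stmt_9 (n : ℕ) (hn : 0 < n)
    (Cm : Matrix (Fin n) (Fin n) ℂ) (hCm : Cm.PosDef)
    (y : Fin n → ℂ)
    (A : Type*) [Fintype A] [Nonempty A]
    (φ : A → Fin n → ℂ) (hφ : ∀ a, φ a ≠ 0)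
    (s q : A → ℝ)
    (hs : ∀ a, (s a : ℂ) = star (φ a) ⬝ᵥ Cm⁻¹.mulVec (φ a))
    (hq : ∀ a, q a = ‖star (φ a) ⬝ᵥ Cm⁻¹.mulVec y‖ ^ 2)
    (F : A → ℝ → ℝ)
    (hF : ∀ (a : A) (γ : ℝ), 0 ≤ γ →
      F a γ = Real.log ((Cm + (γ : ℂ) • Matrix.vecMulVec (φ a) (star (φ a))).det.re) +
        (star y ⬝ᵥ ((Cm + (γ : ℂ) • Matrix.vecMulVec (φ a) (star (φ a)))⁻¹.mulVec y)).re)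
    (astar : A) (hastar : s astar < q astar)
    (hmax : ∀ a : A, s a < q a → q a / s a ≤ q astar / s astar) :
    (∀ a : A, 0 < s a) ∧
    ∀ (a : A) (γ : ℝ), 0 ≤ γ →
      F astar ((q astar - s astar) / (s astar) ^ 2) ≤ F a γ := by

  have hspos : ∀ a, 0 < s a := by
    intro a
    have h := hCm.inv.dotProduct_mulVec_pos (hφ a)
    rw [← hs a] at h
    exact Complex.zero_lt_real.mp h
  refine ⟨hspos, ?_⟩
  have hq0 : ∀ a, 0 ≤ q a := fun a => by rw [hq a]; positivity
  have hqC : ∀ a, ((q a : ℝ) : ℂ) =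
      (star (φ a) ⬝ᵥ Cm⁻¹ *ᵥ y) * star (star (φ a) ⬝ᵥ Cm⁻¹ *ᵥ y) := by
    intro a
    rw [hq a, Complex.sq_norm, ← Complex.mul_conj]
    rfl
  have hFval : ∀ a (γ:ℝ), 0 ≤ γ → F a γ = Real.log (Cm.det.re) + (star y ⬝ᵥ (Cm⁻¹ *ᵥ y)).re
      + (Real.log (1 + γ * s a) - γ * q a / (1 + γ * s a)) := by
    intro a γ hγ
    rw [hF a γ hγ, matrix_step Cm hCm (φ a) y γ (s a) (q a) hγ (hspos a) (hs a) (hqC a)]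
  intro a γ hγ
  have hsstar := hspos astar
  have hγstar : 0 ≤ (q astar - s astar) / s astar ^ 2 :=
    div_nonneg (by linarith) (by positivity)
  rw [hFval astar _ hγstar, hFval a γ hγ]
  have hT : 1 < q astar / s astar := (one_lt_div hsstar).2 hastar
  have hqstar : 0 < q astar := lt_trans hsstar hastar
  have e1 : 1 + (q astar - s astar) / s astar ^ 2 * s astar = q astar / s astar := by
    field_simp
    ring
  have e2 : (q astar - s astar) / s astar ^ 2 * q astar / (q astar / s astar)
      = q astar / s astar - 1 := by
    field_simp
  rw [e1, e2]
  have := real_step (s a) (q a) (q astar / s astar) (hspos a) (hq0 a) hT (hmax a) γ hγ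
  linarith
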